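/- Let $f : \mathbb{R} \times \mathbb{R}^d \to \mathbb{R}^d$ satisfy $\|f(t,x) - f(t,y)\| \leq C_1 (1 + \|x\|^{\gamma-1} + \|y\|^{\gamma-1}) \|x - y\|$ for all $x, y \in \mathbb{R}^d$, where $\gamma \geq 1$. Let $\Phi(x) = \min\{1, h^{-1/(2\gamma)}\|x\|^{-1}\} x$ (with $\Phi(0)=0$) for $h \in (0,1)$. Then $\|f(t,\Phi(x)) - f(t,\Phi(y))\| \leq 3 C_1 h^{-(\gamma-1)/(2\gamma)} \|x - y\|$ for all $x, y \in \mathbb{R}^d$. -/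

import Mathlib

open RealInnerProductSpace

lemma proj_norm_le {E : Type*} [NormedAddCommGroup E] [InnerProductSpace ℝ E]
    (R : ℝ) (hR : 0 < R) (x : E) : ‖(min 1 (R * ‖x‖⁻¹)) • x‖ ≤ R := by
  rcases eq_or_ne x 0 with rfl | hx
  · simpa using hR.le
  have hxn : 0 < ‖x‖ := norm_pos_iff.mpr hx
  rcases min_cases 1 (R * ‖x‖⁻¹) with ⟨hmin, hle⟩ | ⟨hmin, hle⟩
  · rw [hmin, one_smul]
    have : ‖x‖ * (R * ‖x‖⁻¹) ≥ ‖x‖ * 1 := by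
      exact mul_le_mul_of_nonneg_left hle hxn.le
    calc ‖x‖ = ‖x‖ * 1 := by ring
      _ ≤ ‖x‖ * (R * ‖x‖⁻¹) := this
      _ = R := by field_simp
  · rw [hmin, norm_smul, Real.norm_eq_abs,
      abs_of_nonneg (by positivity : (0:ℝ) ≤ R * ‖x‖⁻¹)]
    field_simp
    exact le_rfl

lemma proj_key {E : Type*} [NormedAddCommGroup E] [InnerProductSpace ℝ E]
    (R : ℝ) (x w : E) (hw : ‖w‖ ≤ R) :
    ⟪x - (min 1 (R * ‖x‖⁻¹)) • x, w - (min 1 (R * ‖x‖⁻¹)) • x⟫ ≤ 0 := by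
  rcases eq_or_ne x 0 with rfl | hx
  · simp
  have hxn : 0 < ‖x‖ := norm_pos_iff.mpr hx
  rcases min_cases 1 (R * ‖x‖⁻¹) with ⟨hmin, hle⟩ | ⟨hmin, hle⟩
  · rw [hmin, one_smul, sub_self]
    simp
  · rw [hmin]
    have hRx : R ≤ ‖x‖ := by
      have := mul_le_mul_of_nonneg_left hle.le hxn.le
      rw [mul_one] at this
      calc R = ‖x‖ * (R * ‖x‖⁻¹) := by field_simp
        _ ≤ ‖x‖ := this
    have h1 : x - (R * ‖x‖⁻¹) • x = (1 - R * ‖x‖⁻¹) • x := by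
      rw [sub_smul, one_smul]
    rw [h1, real_inner_smul_left]
    have hcoef : 0 ≤ 1 - R * ‖x‖⁻¹ := by linarith
    have hinner : ⟪x, w - (R * ‖x‖⁻¹) • x⟫ ≤ 0 := by
      rw [inner_sub_right, real_inner_smul_right, real_inner_self_eq_norm_sq]
      have h2 : ⟪x, w⟫ ≤ ‖x‖ * ‖w‖ := real_inner_le_norm x w
      have h3 : R * ‖x‖⁻¹ * ‖x‖ ^ 2 = R * ‖x‖ := by
        field_simp
      rw [h3]
      have : ‖x‖ * ‖w‖ ≤ ‖x‖ * R := mul_le_mul_of_nonneg_left hw hxn.le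
      nlinarith
    exact mul_nonpos_of_nonneg_of_nonpos hcoef hinner

lemma proj_lipschitz {E : Type*} [NormedAddCommGroup E] [InnerProductSpace ℝ E]
    (R : ℝ) (hR : 0 < R) (x y : E) :
    ‖(min 1 (R * ‖x‖⁻¹)) • x - (min 1 (R * ‖y‖⁻¹)) • y‖ ≤ ‖x - y‖ := by
  set a : E := (min 1 (R * ‖x‖⁻¹)) • x with ha
  set b : E := (min 1 (R * ‖y‖⁻¹)) • y with hb
  have h1 : ⟪x - a, b - a⟫ ≤ 0 := proj_key R x b (proj_norm_le R hR y)
  have h2 : ⟪y - b, a - b⟫ ≤ 0 := proj_key R y a (proj_norm_le R hR x)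
  have expand : ⟪x - y, a - b⟫ = ‖a - b‖ ^ 2 + (⟪x - a, a - b⟫ + ⟪y - b, b - a⟫) := by
    rw [← real_inner_self_eq_norm_sq]
    simp only [inner_sub_left, inner_sub_right]
    ring
  have h1' : 0 ≤ ⟪x - a, a - b⟫ := by
    have : ⟪x - a, a - b⟫ = -⟪x - a, b - a⟫ := by
      rw [← inner_neg_right, neg_sub]
    linarith [this ▸ neg_nonneg.mpr h1]
  have h2' : 0 ≤ ⟪y - b, b - a⟫ := by
    have : ⟪y - b, b - a⟫ = -⟪y - b, a - b⟫ := by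
      rw [← inner_neg_right, neg_sub]
    linarith [this ▸ neg_nonneg.mpr h2]
  have key : ‖a - b‖ ^ 2 ≤ ⟪x - y, a - b⟫ := by linarith
  have cs : ⟪x - y, a - b⟫ ≤ ‖x - y‖ * ‖a - b‖ := real_inner_le_norm _ _
  rcases eq_or_lt_of_le (norm_nonneg (a - b)) with h0 | h0
  · rw [← h0]; exact norm_nonneg _
  · have : ‖a - b‖ * ‖a - b‖ ≤ ‖x - y‖ * ‖a - b‖ := by nlinarith
    exact le_of_mul_le_mul_right this h0

theorem f_comp_projection_lipschitz
    (d : ℕ) (h γ C₁ : ℝ) (hh : h ∈ Set.Ioo (0 : ℝ) 1) (hγ : 1 ≤ γ) (hC₁ : 0 < C₁)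
    (f : ℝ → EuclideanSpace ℝ (Fin d) → EuclideanSpace ℝ (Fin d))
    (hf : ∀ t x y, ‖f t x - f t y‖ ≤ C₁ * (1 + ‖x‖ ^ (γ - 1) + ‖y‖ ^ (γ - 1)) * ‖x - y‖)
    (Φ : EuclideanSpace ℝ (Fin d) → EuclideanSpace ℝ (Fin d))
    (hΦ : ∀ x, x ≠ 0 → Φ x = (min 1 (h ^ (-(1 / (2 * γ))) * ‖x‖⁻¹)) • x)
    (hΦ0 : Φ 0 = 0) :
    ∀ t x y, ‖f t (Φ x) - f t (Φ y)‖ ≤ 3 * C₁ * h ^ (-((γ - 1) / (2 * γ))) * ‖x - y‖ := by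
  obtain ⟨hh0, hh1⟩ := hh
  set R : ℝ := h ^ (-(1 / (2 * γ))) with hRdef
  have hR : 0 < R := Real.rpow_pos_of_pos hh0 _
  have hΦ' : ∀ x, Φ x = (min 1 (R * ‖x‖⁻¹)) • x := by
    intro x
    rcases eq_or_ne x 0 with rfl | hx
    · simp [hΦ0]
    · exact hΦ x hx
  set M : ℝ := h ^ (-((γ - 1) / (2 * γ))) with hMdef
  have hγ0 : 0 < γ := lt_of_lt_of_le one_pos hγ
  have hM1 : 1 ≤ M := by
    apply Real.one_le_rpow_of_pos_of_le_one_of_nonpos hh0 hh1.le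
    have : 0 ≤ (γ - 1) / (2 * γ) := div_nonneg (by linarith) (by linarith)
    linarith
  have hRM : R ^ (γ - 1) = M := by
    rw [hRdef, hMdef, ← Real.rpow_mul hh0.le]
    congr 1
    ring
  intro t x y
  have hnx : ‖Φ x‖ ≤ R := by rw [hΦ']; exact proj_norm_le R hR x
  have hny : ‖Φ y‖ ≤ R := by rw [hΦ']; exact proj_norm_le R hR y
  have hbx : ‖Φ x‖ ^ (γ - 1) ≤ M := by
    rw [← hRM]
    exact Real.rpow_le_rpow (norm_nonneg _) hnx (by linarith)
  have hby : ‖Φ y‖ ^ (γ - 1) ≤ M := by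
    rw [← hRM]
    exact Real.rpow_le_rpow (norm_nonneg _) hny (by linarith)
  have hlip : ‖Φ x - Φ y‖ ≤ ‖x - y‖ := by
    rw [hΦ' x, hΦ' y]; exact proj_lipschitz R hR x y
  calc ‖f t (Φ x) - f t (Φ y)‖
      ≤ C₁ * (1 + ‖Φ x‖ ^ (γ - 1) + ‖Φ y‖ ^ (γ - 1)) * ‖Φ x - Φ y‖ := hf t _ _
    _ ≤ C₁ * (3 * M) * ‖x - y‖ := by
        apply mul_le_mul
        · apply mul_le_mul_of_nonneg_left _ hC₁.le
          linarith
        · exact hlip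
        · exact norm_nonneg _
        · positivity
    _ = 3 * C₁ * M * ‖x - y‖ := by ring
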